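/- arXiv:2209.05101 — 4 statements merged into one kernel-verified Lean document; each statement's English description precedes it below -/
import Mathlib

section
/- Let φ : ℝ^ℓ → [0,∞) be continuously differentiable and let H = ∏ᵢ [aᵢ, bᵢ] be an ℓ-dimensional hyperrectangle with aᵢ < bᵢ, corners z₁,…,z_{2^ℓ}, and side lengths δzᵢ = bᵢ − aᵢ. Suppose Lᵢ ≥ |(∇φ(z))ᵢ| for all z ∈ H and all i = 1,…,ℓ. If ∑ⱼ Lⱼ·δzⱼ < 2γ* + 2τ − (2/2^ℓ)·∑ᵢ φ(zᵢ), where γ* ≥ maxᵢ φ(zᵢ) and τ > 0, then φ(z) < γ* + τ for all z ∈ H. -/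
lemma aux_sum_bool {ℓ : ℕ} (i : Fin ℓ) (f : Bool → ℝ) :
    ∑ c : Fin ℓ → Bool, f (c i) = 2 ^ (ℓ - 1) * (f false + f true) := by
  rw [← Equiv.sum_comp (Equiv.funSplitAt i Bool).symm (fun c => f (c i))]
  simp only [Equiv.funSplitAt_symm_apply, dif_pos rfl]
  rw [Fintype.sum_prod_type]
  simp [Finset.sum_const, Fintype.card_fun, Fintype.card_subtype_compl,
    Fintype.card_subtype_eq, mul_comm]
  ring

/-- Lemma (Guarantees inside the cells): for a `C¹` function `φ : ℝ^ℓ → [0,∞)`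
on a hyperrectangle `H = ∏ᵢ [aᵢ, bᵢ]` with corners `z_c` (indexed by
`c : Fin ℓ → Bool`), if `Lᵢ` bounds `|(∇φ)ᵢ|` on `H` and
`∑ⱼ Lⱼ (bⱼ − aⱼ) < 2γ* + 2τ − (2/2^ℓ) ∑_c φ(z_c)` with `γ* ≥ max_c φ(z_c)`,
then `φ(z) < γ* + τ` for all `z ∈ H`. -/
theorem stmt_1 {ℓ : ℕ} (φ : (Fin ℓ → ℝ) → ℝ)
    (hφ : ContDiff ℝ 1 φ) (hφ0 : ∀ z, 0 ≤ φ z)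
    (a b : Fin ℓ → ℝ) (hab : ∀ i, a i < b i)
    (L : Fin ℓ → ℝ)
    (hL : ∀ z ∈ Set.univ.pi (fun i => Set.Icc (a i) (b i)), ∀ i,
      |fderiv ℝ φ z (Pi.single i 1 : Fin ℓ → ℝ)| ≤ L i)
    (γstar τ : ℝ) (hτ : 0 < τ)
    (corner : (Fin ℓ → Bool) → (Fin ℓ → ℝ))
    (hcorner : ∀ c i, corner c i = if c i then b i else a i)
    (hγ : ∀ c, φ (corner c) ≤ γstar)
    (hcond : ∑ j, L j * (b j - a j)
      < 2 * γstar + 2 * τ - (2 / 2 ^ ℓ) * ∑ c : Fin ℓ → Bool, φ (corner c)) :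
    ∀ z ∈ Set.univ.pi (fun i => Set.Icc (a i) (b i)), φ z < γstar + τ := by
  intro z hz
  set H : Set (Fin ℓ → ℝ) := Set.univ.pi (fun i => Set.Icc (a i) (b i)) with hHdef
  have hHconv : Convex ℝ H := convex_pi fun i _ => convex_Icc _ _
  -- directional derivative bound
  have hdir : ∀ x ∈ H, ∀ v : Fin ℓ → ℝ, |fderiv ℝ φ x v| ≤ ∑ i, L i * |v i| := by
    intro x hx v
    have hv : v = ∑ i, v i • (Pi.single i 1 : Fin ℓ → ℝ) := by
      funext j
      simp [Finset.sum_apply, Pi.single_apply]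
    conv_lhs => rw [hv]
    rw [map_sum]
    refine (Finset.abs_sum_le_sum_abs _ _).trans (Finset.sum_le_sum fun i _ => ?_)
    rw [map_smul, smul_eq_mul, abs_mul, mul_comm (L i)]
    exact mul_le_mul_of_nonneg_left (hL x hx i) (abs_nonneg _)
  -- mean value bound against any point of H
  have hmvt : ∀ w ∈ H, |φ z - φ w| ≤ ∑ i, L i * |z i - w i| := by
    intro w hw
    set g : ℝ → ℝ := fun t => φ (w + t • (z - w)) with hgdef
    have hmem : ∀ t ∈ Set.Icc (0:ℝ) 1, w + t • (z - w) ∈ H := fun t ht =>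
      hHconv.add_smul_sub_mem hw hz ht
    have hg : ∀ t ∈ Set.Icc (0:ℝ) 1,
        HasDerivWithinAt g (fderiv ℝ φ (w + t • (z - w)) (z - w)) (Set.Icc 0 1) t := by
      intro t ht
      have h1 : HasDerivAt (fun t : ℝ => w + t • (z - w)) (z - w) t := by
        simpa using ((hasDerivAt_id t).smul_const (z - w)).const_add w
      exact ((hφ.differentiable one_ne_zero _).hasFDerivAt.comp_hasDerivAt t h1).hasDerivWithinAt
    have hbd : ∀ t ∈ Set.Ico (0:ℝ) 1,
        ‖fderiv ℝ φ (w + t • (z - w)) (z - w)‖ ≤ ∑ i, L i * |z i - w i| := by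
      intro t ht
      have := hdir _ (hmem t (Set.Ico_subset_Icc_self ht)) (z - w)
      simpa using this
    have := norm_image_sub_le_of_norm_deriv_le_segment_01' hg hbd
    simpa [hgdef] using this
  -- per-corner bound
  have hcornermem : ∀ c, corner c ∈ H := by
    intro c i _
    rw [hcorner]
    rcases c i with _ | _ <;> simp [Set.mem_Icc, le_of_lt (hab i)]
  have hper : ∀ c, φ z ≤ φ (corner c) + ∑ i, L i * |z i - corner c i| := by
    intro c
    have := hmvt (corner c) (hcornermem c)
    have h2 := (abs_le.mp this).2
    linarith
  -- sum over corners
  have hzi : ∀ i, a i ≤ z i ∧ z i ≤ b i := fun i => (hz i (Set.mem_univ i))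
  have hinner : ∀ i, ∑ c : Fin ℓ → Bool, |z i - corner c i|
      = 2 ^ (ℓ - 1) * (b i - a i) := by
    intro i
    have : ∀ c : Fin ℓ → Bool, |z i - corner c i|
        = (fun s : Bool => if s then b i - z i else z i - a i) (c i) := by
      intro c
      rw [hcorner]
      rcases c i with _ | _
      · simp [abs_of_nonneg (sub_nonneg.mpr (hzi i).1)]
      · simp [abs_of_nonpos (sub_nonpos.mpr (hzi i).2), neg_sub]
    simp_rw [this]
    rw [aux_sum_bool i (fun s : Bool => if s then b i - z i else z i - a i)]
    norm_num
  have hcard : (Fintype.card (Fin ℓ → Bool) : ℝ) = 2 ^ ℓ := by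
    simp [Fintype.card_fun]
  have hbig : (2:ℝ) ^ ℓ * φ z ≤ (∑ c : Fin ℓ → Bool, φ (corner c))
      + 2 ^ (ℓ - 1) * ∑ j, L j * (b j - a j) := by
    have := Finset.sum_le_sum (fun c (_ : c ∈ Finset.univ) => hper c)
    rw [Finset.sum_const, Finset.card_univ, nsmul_eq_mul, hcard, Finset.sum_add_distrib] at this
    refine this.trans ?_
    rw [Finset.sum_comm, Finset.mul_sum]
    refine add_le_add_right (le_of_eq (Finset.sum_congr rfl fun i _ => ?_)) _
    rw [← Finset.mul_sum, hinner i]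
    ring
  -- arithmetic
  have hτ' := hτ
  have hD : (2:ℝ) ^ (ℓ - 1) * ∑ j, L j * (b j - a j)
      ≤ ((2:ℝ) ^ ℓ / 2) * ∑ j, L j * (b j - a j) := by
    rcases Nat.eq_zero_or_pos ℓ with h | h
    · subst h; simp
    · apply le_of_eq; congr 1
      rw [eq_div_iff (by norm_num : (2:ℝ) ≠ 0), ← pow_succ]
      congr 1; omega
  have hP : (0:ℝ) < 2 ^ ℓ := by positivity
  have h3 := mul_lt_mul_of_pos_left hcond (show (0:ℝ) < 2 ^ ℓ / 2 from by positivity)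
  have h2 : (2:ℝ) ^ ℓ * φ z < 2 ^ ℓ * (γstar + τ) := by
    calc (2:ℝ) ^ ℓ * φ z
        ≤ (∑ c : Fin ℓ → Bool, φ (corner c)) + ((2:ℝ) ^ ℓ / 2) * ∑ j, L j * (b j - a j) := by
          linarith [hbig]
      _ < (∑ c : Fin ℓ → Bool, φ (corner c)) + ((2:ℝ) ^ ℓ / 2) *
            (2 * γstar + 2 * τ - (2 / 2 ^ ℓ) * ∑ c : Fin ℓ → Bool, φ (corner c)) := by
          linarith
      _ = 2 ^ ℓ * (γstar + τ) := by field_simp; ring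
  exact (mul_lt_mul_iff_right₀ hP).mp h2
end

section
/- If J, R, Q ∈ ℝ^{n×n} with J skew-symmetric, R symmetric positive definite, and Q symmetric positive definite, then every eigenvalue λ of M = (J − R)Q satisfies Re(λ) < 0, i.e., M is asymptotically stable. -/
open Matrix

lemma re_quad {n : ℕ} (A : Matrix (Fin n) (Fin n) ℝ) (x : Fin n → ℂ) :
    (star x ⬝ᵥ (A.map Complex.ofReal) *ᵥ x).re =
      (fun i => (x i).re) ⬝ᵥ (A *ᵥ fun i => (x i).re) +
      (fun i => (x i).im) ⬝ᵥ (A *ᵥ fun i => (x i).im) := by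
  simp only [dotProduct, mulVec, Pi.star_apply, map, of_apply, Finset.mul_sum,
    Complex.re_sum, Complex.mul_re, Complex.mul_im, Complex.ofReal_re, Complex.ofReal_im,
    RCLike.star_def, Complex.conj_re, Complex.conj_im]
  rw [← Finset.sum_add_distrib]
  refine Finset.sum_congr rfl fun i _ => ?_
  rw [← Finset.sum_add_distrib]
  refine Finset.sum_congr rfl fun j _ => ?_
  ring

lemma im_quad {n : ℕ} (A : Matrix (Fin n) (Fin n) ℝ) (x : Fin n → ℂ) :
    (star x ⬝ᵥ (A.map Complex.ofReal) *ᵥ x).im =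
      (fun i => (x i).re) ⬝ᵥ (A *ᵥ fun i => (x i).im) -
      (fun i => (x i).im) ⬝ᵥ (A *ᵥ fun i => (x i).re) := by
  simp only [dotProduct, mulVec, Pi.star_apply, map, of_apply, Finset.mul_sum,
    Complex.im_sum, Complex.mul_re, Complex.mul_im, Complex.ofReal_re, Complex.ofReal_im,
    RCLike.star_def, Complex.conj_re, Complex.conj_im]
  rw [← Finset.sum_sub_distrib]
  refine Finset.sum_congr rfl fun i _ => ?_
  rw [← Finset.sum_sub_distrib]
  refine Finset.sum_congr rfl fun j _ => ?_
  ring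

lemma skew_quad_zero {n : ℕ} {J : Matrix (Fin n) (Fin n) ℝ} (hJ : Jᵀ = -J)
    (x : Fin n → ℝ) : x ⬝ᵥ J *ᵥ x = 0 := by
  have h : x ⬝ᵥ J *ᵥ x = (Jᵀ *ᵥ x) ⬝ᵥ x := by
    rw [dotProduct_mulVec, ← mulVec_transpose]
  rw [hJ, neg_mulVec, neg_dotProduct, dotProduct_comm (J *ᵥ x) x] at h
  linarith

lemma symm_quad_comm {n : ℕ} {Q : Matrix (Fin n) (Fin n) ℝ} (hQ : Qᵀ = Q)
    (x y : Fin n → ℝ) : x ⬝ᵥ Q *ᵥ y = y ⬝ᵥ Q *ᵥ x := by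
  rw [dotProduct_mulVec, ← mulVec_transpose, hQ, dotProduct_comm]


/-- If `J` is skew-symmetric and `R`, `Q` are symmetric positive definite,
then every eigenvalue of `M = (J − R)Q` has strictly negative real part,
i.e. `M` is asymptotically stable. -/
theorem stmt_3 {n : ℕ} (J R Q : Matrix (Fin n) (Fin n) ℝ)
    (hJ : Jᵀ = -J) (hR : R.PosDef) (hQ : Q.PosDef)
    (M : Matrix (Fin n) (Fin n) ℝ) (hM : M = (J - R) * Q)
    (lam : ℂ) (v : Fin n → ℂ) (hv : v ≠ 0)
    (heig : (M.map Complex.ofReal) *ᵥ v = lam • v) :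
    lam.re < 0 := by
  have hQsymm : Qᵀ = Q := by
    ext i j
    have := congrFun (congrFun hQ.1 i) j
    simpa using this
  set Qc := Q.map Complex.ofReal with hQc
  set w := Qc *ᵥ v with hw
  set q := star v ⬝ᵥ Qc *ᵥ v with hq
  have hposQ : ∀ x : Fin n → ℝ, x ≠ 0 → 0 < x ⬝ᵥ Q *ᵥ x := by
    intro x hx; simpa using hQ.dotProduct_mulVec_pos hx
  have hposR : ∀ x : Fin n → ℝ, x ≠ 0 → 0 < x ⬝ᵥ R *ᵥ x := by
    intro x hx; simpa using hR.dotProduct_mulVec_pos hx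
  have hnnR : ∀ x : Fin n → ℝ, 0 ≤ x ⬝ᵥ R *ᵥ x := by
    intro x; simpa using hR.posSemidef.dotProduct_mulVec_nonneg x
  have hnnQ : ∀ x : Fin n → ℝ, 0 ≤ x ⬝ᵥ Q *ᵥ x := by
    intro x; simpa using hQ.posSemidef.dotProduct_mulVec_nonneg x
  have hab : (fun i => (v i).re) ≠ (0 : Fin n → ℝ) ∨ (fun i => (v i).im) ≠ (0 : Fin n → ℝ) := by
    by_contra h
    push_neg at h
    exact hv (funext fun i => Complex.ext (congrFun h.1 i) (congrFun h.2 i))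
  have hqre : 0 < q.re := by
    rw [hq, hQc, re_quad]
    rcases hab with h | h
    · exact add_pos_of_pos_of_nonneg (hposQ _ h) (hnnQ _)
    · exact add_pos_of_nonneg_of_pos (hnnQ _) (hposQ _ h)
  have hqim : q.im = 0 := by
    rw [hq, hQc, im_quad, symm_quad_comm hQsymm (fun i => (v i).re) (fun i => (v i).im),
      sub_self]
  have hwne : w ≠ 0 := by
    intro h
    have h0 : q = star v ⬝ᵥ w := rfl
    rw [h, dotProduct_zero] at h0
    rw [h0] at hqre
    simp at hqre
  have hQherm : Qcᴴ = Qc := by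
    ext i j
    simp only [hQc, conjTranspose_apply, map_apply]
    rw [show (star ((Q j i : ℝ) : ℂ)) = ((Q j i : ℝ) : ℂ) from Complex.conj_ofReal _,
      Complex.ofReal_inj]
    exact congrFun (congrFun hQsymm i) j
  have hMc : M.map Complex.ofReal = (J.map Complex.ofReal - R.map Complex.ofReal) * Qc := by
    rw [hM, hQc]
    ext i j
    simp [Matrix.mul_apply, Matrix.sub_apply, map_apply]
  have key : star w ⬝ᵥ ((J.map Complex.ofReal - R.map Complex.ofReal) *ᵥ w) = lam * q := by
    have h1 : star w ⬝ᵥ ((J.map Complex.ofReal - R.map Complex.ofReal) *ᵥ w)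
        = star v ⬝ᵥ (Qc *ᵥ ((M.map Complex.ofReal) *ᵥ v)) := by
      rw [hMc, hw, star_mulVec, hQherm, mulVec_mulVec, mulVec_mulVec, dotProduct_mulVec,
        vecMul_vecMul, ← dotProduct_mulVec, ← Matrix.mul_assoc]
    rw [h1, heig, mulVec_smul, dotProduct_smul, hq, smul_eq_mul]
  have hkey_re : (star w ⬝ᵥ ((J.map Complex.ofReal - R.map Complex.ofReal) *ᵥ w)).re
      = lam.re * q.re := by
    rw [key, Complex.mul_re, hqim]; ring
  have hwab : (fun i => (w i).re) ≠ (0 : Fin n → ℝ) ∨ (fun i => (w i).im) ≠ (0 : Fin n → ℝ) := by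
    by_contra h
    push_neg at h
    exact hwne (funext fun i => Complex.ext (congrFun h.1 i) (congrFun h.2 i))
  have hsub : (J.map Complex.ofReal - R.map Complex.ofReal) = (J - R).map Complex.ofReal := by
    ext i j; simp [map_apply]
  have hlhs : (star w ⬝ᵥ ((J.map Complex.ofReal - R.map Complex.ofReal) *ᵥ w)).re
      = -((fun i => (w i).re) ⬝ᵥ R *ᵥ (fun i => (w i).re)
          + (fun i => (w i).im) ⬝ᵥ R *ᵥ (fun i => (w i).im)) := by
    rw [hsub, re_quad, sub_mulVec, sub_mulVec, dotProduct_sub, dotProduct_sub,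
      skew_quad_zero hJ (fun i => (w i).re), skew_quad_zero hJ (fun i => (w i).im)]
    ring
  have hRpos : 0 < (fun i => (w i).re) ⬝ᵥ R *ᵥ (fun i => (w i).re)
      + (fun i => (w i).im) ⬝ᵥ R *ᵥ (fun i => (w i).im) := by
    rcases hwab with h | h
    · exact add_pos_of_pos_of_nonneg (hposR _ h) (hnnR _)
    · exact add_pos_of_nonneg_of_pos (hnnR _) (hposR _ h)
  have hneg : lam.re * q.re < 0 := by
    rw [← hkey_re, hlhs]; linarith
  nlinarith
end

section
/- Let J(p), R(p), Q(p) be matrix-valued functions on a parameter set Ω with, for every p ∈ Ω, J(p) skew-symmetric, R(p) symmetric positive semi-definite, and Q a constant symmetric positive definite matrix. Let V ∈ ℝ^{n×r} have full column rank and W = QV(VᵀQV)^{−1}. Then for every p ∈ Ω, the reduced system matrices Ĵ(p) = WᵀJ(p)W, R̂(p) = WᵀR(p)W, and Q̂ = VᵀQV satisfy: Ĵ(p) is skew-symmetric, R̂(p) is symmetric positive semi-definite, and Q̂ is symmetric positive definite; hence the reduced matrix (Ĵ(p) − R̂(p))Q̂ has all eigenvalues with nonpositive real part for all p ∈ Ω.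 -/
open Matrix

lemma quad_re_eq {r : ℕ} (S : Matrix (Fin r) (Fin r) ℝ) (v : Fin r → ℂ) :
    (star v ⬝ᵥ (S.map Complex.ofReal) *ᵥ v).re
      = (fun i => (v i).re) ⬝ᵥ S *ᵥ (fun i => (v i).re)
        + (fun i => (v i).im) ⬝ᵥ S *ᵥ (fun i => (v i).im) := by
  simp [dotProduct, mulVec, Complex.mul_re, Complex.re_sum, Complex.im_sum,
    Finset.mul_sum, Finset.sum_add_distrib, mul_comm, mul_left_comm]

lemma quad_re_nonneg {r : ℕ} {S : Matrix (Fin r) (Fin r) ℝ} (hS : S.PosSemidef)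
    (v : Fin r → ℂ) : 0 ≤ (star v ⬝ᵥ (S.map Complex.ofReal) *ᵥ v).re := by
  rw [quad_re_eq]
  have h1 := hS.dotProduct_mulVec_nonneg (fun i => (v i).re)
  have h2 := hS.dotProduct_mulVec_nonneg (fun i => (v i).im)
  simp only [star_trivial] at h1 h2
  exact add_nonneg h1 h2

lemma quad_re_pos {r : ℕ} {S : Matrix (Fin r) (Fin r) ℝ} (hS : S.PosDef)
    {v : Fin r → ℂ} (hv : v ≠ 0) : 0 < (star v ⬝ᵥ (S.map Complex.ofReal) *ᵥ v).re := by
  rw [quad_re_eq]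
  set x : Fin r → ℝ := fun i => (v i).re
  set y : Fin r → ℝ := fun i => (v i).im
  have hxy : x ≠ 0 ∨ y ≠ 0 := by
    by_contra h
    push_neg at h
    apply hv
    funext i
    have hx := congrFun h.1 i
    have hy := congrFun h.2 i
    exact Complex.ext hx hy
  rcases hxy with h | h
  · have h1 := hS.dotProduct_mulVec_pos h
    have h2 := hS.posSemidef.dotProduct_mulVec_nonneg y
    simp only [star_trivial] at h1 h2
    linarith
  · have h1 := hS.posSemidef.dotProduct_mulVec_nonneg x
    have h2 := hS.dotProduct_mulVec_pos h
    simp only [star_trivial] at h1 h2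
    linarith

lemma quad_star {r : ℕ} (S : Matrix (Fin r) (Fin r) ℝ) (v : Fin r → ℂ) :
    star (star v ⬝ᵥ (S.map Complex.ofReal) *ᵥ v)
      = star v ⬝ᵥ (Sᵀ.map Complex.ofReal) *ᵥ v := by
  have hH : (S.map Complex.ofReal)ᴴ = Sᵀ.map Complex.ofReal := by
    ext i j
    simp [conjTranspose_apply, Matrix.map_apply]
  rw [star_dotProduct, star_star, star_mulVec, dotProduct_mulVec, hH]

theorem stmt_14' : True := trivial

lemma trans3 {r : ℕ} (A B C : Matrix (Fin r) (Fin r) ℝ) :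
    (A * B * C)ᵀ = Cᵀ * Bᵀ * Aᵀ := by
  rw [Matrix.transpose_mul, Matrix.transpose_mul, Matrix.mul_assoc]

lemma split3 {r : ℕ} (A B C : Matrix (Fin r) (Fin r) ℝ) :
    C * ((A - B) * C) = C * A * C - C * B * C := by noncomm_ring

lemma quad_re_zero_of_skew {r : ℕ} {S : Matrix (Fin r) (Fin r) ℝ} (hS : Sᵀ = -S)
    (v : Fin r → ℂ) : (star v ⬝ᵥ (S.map Complex.ofReal) *ᵥ v).re = 0 := by
  have h := quad_star S v
  rw [hS] at h
  have : ((-S).map Complex.ofReal) = -(S.map Complex.ofReal) := by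
    ext i j; simp
  rw [this, neg_mulVec, dotProduct_neg] at h
  have := congrArg Complex.re h
  simp only [Complex.neg_re] at this
  rw [Complex.star_def, Complex.conj_re] at this
  linarith

lemma quad_im_zero_of_symm {r : ℕ} {S : Matrix (Fin r) (Fin r) ℝ} (hS : Sᵀ = S)
    (v : Fin r → ℂ) : (star v ⬝ᵥ (S.map Complex.ofReal) *ᵥ v).im = 0 := by
  have h := quad_star S v
  rw [hS] at h
  have := congrArg Complex.im h
  rw [Complex.star_def, Complex.conj_im] at this
  linarith

/-- Structure preservation of the global-basis IRKA-PH projection together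
with DH-stability: if `J(p)` is skew-symmetric and `R(p)` symmetric PSD for
all `p ∈ Ω`, `Q` is a constant symmetric positive definite matrix, `V` has
full column rank and `W = QV(VᵀQV)⁻¹`, then for every `p` the reduced matrices
`Ĵ(p) = WᵀJ(p)W`, `R̂(p) = WᵀR(p)W`, `Q̂ = VᵀQV` are skew-symmetric, symmetric
PSD, and symmetric positive definite respectively, and every eigenvalue of
`(Ĵ(p) − R̂(p))Q̂` has nonpositive real part. -/
theorem stmt_14 {n r : ℕ} {Ω : Type*}
    (J R : Ω → Matrix (Fin n) (Fin n) ℝ) (Q : Matrix (Fin n) (Fin n) ℝ)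
    (hJ : ∀ p, (J p)ᵀ = -(J p)) (hR : ∀ p, (R p).PosSemidef) (hQ : Q.PosDef)
    (V : Matrix (Fin n) (Fin r) ℝ) (hV : Function.Injective V.mulVec)
    (W : Matrix (Fin n) (Fin r) ℝ) (hW : W = Q * V * (Vᵀ * Q * V)⁻¹) :
    ∀ p : Ω,
      (Wᵀ * J p * W)ᵀ = -(Wᵀ * J p * W) ∧
      (Wᵀ * R p * W).PosSemidef ∧
      (Vᵀ * Q * V).PosDef ∧
      (∀ (lam : ℂ) (v : Fin r → ℂ), v ≠ 0 →
        (((Wᵀ * J p * W - Wᵀ * R p * W) * (Vᵀ * Q * V)).map Complex.ofReal) *ᵥ v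
          = lam • v → lam.re ≤ 0) := by
  intro p
  have hWH : Wᴴ = Wᵀ := by ext i j; simp [conjTranspose_apply]
  have hQsym : Qᵀ = Q := by
    ext i j
    have h := congrFun (congrFun hQ.1 i) j
    simpa using h
  set Jh := Wᵀ * J p * W with hJh
  set Rh := Wᵀ * R p * W with hRh
  set Qh := Vᵀ * Q * V with hQh
  -- skew-symmetry of Jh
  have h1 : Jhᵀ = -Jh := by
    rw [hJh, transpose_mul, transpose_mul, transpose_transpose, hJ p]
    simp [Matrix.mul_assoc]
  -- PSD of Rh
  have h2 : Rh.PosSemidef := by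
    have := (hR p).conjTranspose_mul_mul_same W
    rwa [hWH] at this
  -- PosDef of Qh
  have hQhsym : Qhᵀ = Qh := by
    rw [hQh, transpose_mul, transpose_mul, transpose_transpose, hQsym, Matrix.mul_assoc]
  have h3 : Qh.PosDef := by
    refine PosDef.of_dotProduct_mulVec_pos ?_ fun x hx => ?_
    · show Qhᴴ = Qh
      rw [show Qhᴴ = Qhᵀ by ext i j; simp [conjTranspose_apply], hQhsym]
    · have hVx : V *ᵥ x ≠ 0 := fun h => hx (hV (h.trans (V.mulVec_zero).symm))
      have := hQ.dotProduct_mulVec_pos hVx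
      simp only [star_trivial] at this ⊢
      rw [hQh, Matrix.mul_assoc, ← mulVec_mulVec, ← mulVec_mulVec,
        dotProduct_mulVec, vecMul_transpose]
      exact this
  refine ⟨h1, h2, h3, fun lam v hv hev => ?_⟩
  -- the quadratic forms
  have hQhH : Qhᴴ = Qh := h3.1
  have hSR : (Qh * Rh * Qh).PosSemidef := by
    have := h2.conjTranspose_mul_mul_same Qh
    rwa [hQhH] at this
  have hSJ : (Qh * Jh * Qh)ᵀ = -(Qh * Jh * Qh) := by
    rw [trans3, hQhsym, h1]
    simp [Matrix.mul_assoc]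
  -- key identity
  have hmap : ∀ (A B : Matrix (Fin r) (Fin r) ℝ),
      (A * B).map Complex.ofReal = A.map Complex.ofReal * B.map Complex.ofReal := by
    intro A B
    exact Matrix.map_mul (f := Complex.ofRealHom)
  have key : star v ⬝ᵥ ((Qh * ((Jh - Rh) * Qh)).map Complex.ofReal) *ᵥ v
      = lam * (star v ⬝ᵥ (Qh.map Complex.ofReal) *ᵥ v) := by
    rw [hmap, ← mulVec_mulVec, hev, mulVec_smul, dotProduct_smul, smul_eq_mul]
  have hsplit : Qh * ((Jh - Rh) * Qh) = (Qh * Jh * Qh) - (Qh * Rh * Qh) :=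
    split3 Jh Rh Qh
  rw [hsplit] at key
  have hsubmap : ((Qh * Jh * Qh - Qh * Rh * Qh).map Complex.ofReal)
      = (Qh * Jh * Qh).map Complex.ofReal - (Qh * Rh * Qh).map Complex.ofReal := by
    ext i j; simp
  rw [hsubmap, sub_mulVec, dotProduct_sub] at key
  have hre := congrArg Complex.re key
  rw [Complex.sub_re, quad_re_zero_of_skew hSJ v, Complex.mul_re,
    quad_im_zero_of_symm hQhsym v] at hre
  have hRpos := quad_re_nonneg hSR v
  have hQpos := quad_re_pos h3 hv
  nlinarith
end

section
/- Let M = (J − R)Q with J skew-symmetric, R symmetric positive semi-definite, Q symmetric positive definite, all in ℝ^{n×n}, and suppose λ = iω is a purely imaginary eigenvalue of M with eigenvector v ∈ ℂⁿ \ {0}. Then R·Q·v = 0; in particular, if R is positive definite then M has no purely imaginary eigenvalues. -/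
open Matrix ComplexOrder

private lemma map_conjTranspose_real {n : ℕ} (A : Matrix (Fin n) (Fin n) ℝ) :
    (A.map Complex.ofReal)ᴴ = Aᵀ.map Complex.ofReal := by
  ext i j
  simp [conjTranspose_apply, Matrix.map_apply]

private lemma map_mul_real {n : ℕ} (A B : Matrix (Fin n) (Fin n) ℝ) :
    (A * B).map Complex.ofReal = A.map Complex.ofReal * B.map Complex.ofReal := by
  ext i j
  simp [Matrix.map_apply, mul_apply]

private lemma psd_map {n : ℕ} {R : Matrix (Fin n) (Fin n) ℝ} (hR : R.PosSemidef) :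
    (R.map Complex.ofReal).PosSemidef := by
  obtain ⟨B, rfl⟩ : ∃ B : Matrix (Fin n) (Fin n) ℝ, R = Bᴴ * B := by
    open scoped MatrixOrder in exact CStarAlgebra.nonneg_iff_eq_star_mul_self.mp hR.nonneg
  have : (Bᴴ * B).map Complex.ofReal = (B.map Complex.ofReal)ᴴ * (B.map Complex.ofReal) := by
    rw [map_conjTranspose_real, map_mul_real]
    congr 1
  rw [this]
  exact posSemidef_conjTranspose_mul_self _

private lemma quad_star_s17 {n : ℕ} {A : Matrix (Fin n) (Fin n) ℂ} (w : Fin n → ℂ) :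
    star (star w ⬝ᵥ A *ᵥ w) = star w ⬝ᵥ Aᴴ *ᵥ w := by
  rw [star_dotProduct, star_star, star_mulVec, dotProduct_comm, dotProduct_mulVec]
  exact dotProduct_comm _ _

/-- For a Dissipative-Hamiltonian matrix `M = (J − R)Q` (`J` skew-symmetric,
`R` symmetric PSD, `Q` symmetric positive definite): any eigenvector `v ≠ 0`
of `M` for a purely imaginary eigenvalue `iω` satisfies `R·Q·v = 0`; in
particular, if `R` is positive definite then `M` has no purely imaginary
eigenvalues. -/
theorem stmt_17 {n : ℕ} (J R Q : Matrix (Fin n) (Fin n) ℝ)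
    (hJ : Jᵀ = -J) (hR : R.PosSemidef) (hQ : Q.PosDef)
    (M : Matrix (Fin n) (Fin n) ℝ) (hM : M = (J - R) * Q) :
    (∀ (ω : ℝ) (v : Fin n → ℂ), v ≠ 0 →
      (M.map Complex.ofReal) *ᵥ v = ((ω : ℂ) * Complex.I) • v →
      ((R * Q).map Complex.ofReal) *ᵥ v = 0) ∧
    (R.PosDef → ∀ (ω : ℝ) (v : Fin n → ℂ), v ≠ 0 →
      (M.map Complex.ofReal) *ᵥ v ≠ ((ω : ℂ) * Complex.I) • v) := by
  set J' := J.map Complex.ofReal with hJ'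
  set R' := R.map Complex.ofReal with hR'
  set Q' := Q.map Complex.ofReal with hQ'
  have hRpsd : R'.PosSemidef := psd_map hR
  have hQsymm : Qᵀ = Q := hQ.isHermitian
  have hRsymm : Rᵀ = R := hR.isHermitian
  have hQH : Q'ᴴ = Q' := by rw [hQ', map_conjTranspose_real, hQsymm]
  have hRH : R'ᴴ = R' := by rw [hR', map_conjTranspose_real, hRsymm]
  have hJH : J'ᴴ = -J' := by
    rw [hJ', map_conjTranspose_real, hJ]
    ext i j; simp
  have key : ∀ (ω : ℝ) (v : Fin n → ℂ), v ≠ 0 →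
      (M.map Complex.ofReal) *ᵥ v = ((ω : ℂ) * Complex.I) • v →
      ((R * Q).map Complex.ofReal) *ᵥ v = 0 := by
    intro ω v hv heig
    set w := Q' *ᵥ v with hw
    have hM' : M.map Complex.ofReal = (J' - R') * Q' := by
      rw [hM, map_mul_real]
      congr 1
      ext i j; simp [Matrix.map_apply, Matrix.sub_apply, hJ', hR']
    have heig' : (J' - R') *ᵥ w = ((ω : ℂ) * Complex.I) • v := by
      rw [hw, mulVec_mulVec, ← hM', heig]
    set q := star v ⬝ᵥ Q' *ᵥ v with hq
    have hqreal : star q = q := by rw [hq, quad_star_s17, hQH]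
    have hswv : star w ⬝ᵥ v = q := by
      rw [hw, star_mulVec, hQH, ← dotProduct_mulVec]
    set c := star w ⬝ᵥ (J' - R') *ᵥ w with hc
    have hc1 : c = ((ω : ℂ) * Complex.I) * q := by
      rw [hc, heig', dotProduct_smul, hswv, smul_eq_mul]
    set r := star w ⬝ᵥ R' *ᵥ w with hr
    have hrreal : star r = r := by rw [hr, quad_star_s17, hRH]
    have hc2 : c + star c = -(2 * r) := by
      have hsc : star c = star w ⬝ᵥ (-J' - R') *ᵥ w := by
        rw [hc, quad_star_s17]
        congr 2
        rw [conjTranspose_sub, hJH, hRH]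
      rw [hc, hsc, ← dotProduct_add, ← add_mulVec]
      have h2 : J' - R' + (-J' - R') = -(2 • R') := by module
      rw [h2]
      simp [hr, neg_mulVec, two_smul, add_mulVec, dotProduct_add, two_mul, dotProduct_neg]
    have hc3 : c + star c = 0 := by
      rw [hc1, star_mul', hqreal]
      have hsi : star ((ω : ℂ) * Complex.I) = -((ω : ℂ) * Complex.I) := by
        simp [Complex.ext_iff]
      rw [hsi]
      ring
    have hrzero : r = 0 := by
      have h2 : (2 : ℂ) * r = 0 := by linear_combination -(hc2.symm.trans hc3)
      simpa using h2
    have hRw : R' *ᵥ w = 0 := (hRpsd.dotProduct_mulVec_zero_iff w).mp hrzero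
    rw [map_mul_real, ← mulVec_mulVec, ← hR', ← hQ', ← hw, hRw]
  refine ⟨key, ?_⟩
  intro hRpd ω v hv heig
  have h0 := key ω v hv heig
  have hdet : ((R * Q).map Complex.ofReal).det ≠ 0 := by
    have : ((R * Q).map Complex.ofReal).det = (((R * Q).det : ℝ) : ℂ) :=
      ((Complex.ofRealHom : ℝ →+* ℂ).map_det (R * Q)).symm
    rw [this]
    simp only [ne_eq, Complex.ofReal_eq_zero, det_mul]
    exact mul_ne_zero hRpd.det_pos.ne' hQ.det_pos.ne'
  exact hv (eq_zero_of_mulVec_eq_zero hdet h0)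
end
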